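/- Suppose the entries B̃_ij of the random matrix B̃ are i.i.d. uniform on [0, 1], d = d̄·e with d̄ > 0, m ≥ 2, U = {h ∈ ℝ^m : h ≥ 0, R h ≤ r} is nonempty and bounded, and ε := 2√((log m)/n) satisfies ε < 1. Then with probability at least 1 − 1/m, z_AR(B̃) ≤ z_Aff(B̃) ≤ (2/(1−ε))·z_AR(B̃). -/

import Mathlib

open Matrix MeasureTheory ProbabilityTheory

/-- Optimal value of the two-stage adjustable robust problem. -/
noncomputable def zAR {m n : ℕ} (U : Set (Fin m → ℝ)) (c d : Fin n → ℝ)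
    (A B : Matrix (Fin m) (Fin n) ℝ) : EReal :=
  ⨅ x : {x : Fin n → ℝ // 0 ≤ x},
    ((c ⬝ᵥ (x : Fin n → ℝ) : ℝ) : EReal) +
      ⨆ h : U,
        ⨅ _y : {y : Fin n → ℝ // 0 ≤ y ∧
            (h : Fin m → ℝ) ≤ A *ᵥ (x : Fin n → ℝ) + B *ᵥ y},
          ((d ⬝ᵥ (_y : Fin n → ℝ) : ℝ) : EReal)

/-- Optimal value of the affine-policy problem. -/
noncomputable def zAff {m n : ℕ} (U : Set (Fin m → ℝ)) (c d : Fin n → ℝ)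
    (A B : Matrix (Fin m) (Fin n) ℝ) : EReal :=
  ⨅ p : {p : (Fin n → ℝ) × Matrix (Fin n) (Fin m) ℝ × (Fin n → ℝ) //
      0 ≤ p.1 ∧ ∀ h ∈ U, 0 ≤ p.2.1 *ᵥ h + p.2.2 ∧
        h ≤ A *ᵥ p.1 + B *ᵥ (p.2.1 *ᵥ h + p.2.2)},
    ((c ⬝ᵥ p.1.1 : ℝ) : EReal) +
      ⨆ h : U, ((d ⬝ᵥ (p.1.2.1 *ᵥ (h : Fin m → ℝ) + p.1.2.2) : ℝ) : EReal)

/-- The polyhedral uncertainty set. -/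
def polyU {m L : ℕ} (R : Matrix (Fin L) (Fin m) ℝ) (r : Fin L → ℝ) : Set (Fin m → ℝ) :=
  {h | 0 ≤ h ∧ R *ᵥ h ≤ r}

/-- The dualized uncertainty set. -/
def dualW {m n : ℕ} (B : Matrix (Fin m) (Fin n) ℝ) (d : Fin n → ℝ) : Set (Fin m → ℝ) :=
  {w | 0 ≤ w ∧ Bᵀ *ᵥ w ≤ d}

/-- Optimal value of the dualized adjustable robust problem. -/
noncomputable def zdAR {m n L : ℕ} (c d : Fin n → ℝ) (A B : Matrix (Fin m) (Fin n) ℝ)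
    (R : Matrix (Fin L) (Fin m) ℝ) (r : Fin L → ℝ) : EReal :=
  ⨅ x : {x : Fin n → ℝ // 0 ≤ x},
    ((c ⬝ᵥ (x : Fin n → ℝ) : ℝ) : EReal) +
      ⨆ w : dualW B d,
        ⨅ l : {l : Fin L → ℝ // 0 ≤ l ∧ (w : Fin m → ℝ) ≤ Rᵀ *ᵥ l},
          ((-(A *ᵥ (x : Fin n → ℝ)) ⬝ᵥ (w : Fin m → ℝ) + r ⬝ᵥ (l : Fin L → ℝ) : ℝ) : EReal)

/-- Optimal value of the dualized affine-policy problem. -/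
noncomputable def zdAff {m n L : ℕ} (c d : Fin n → ℝ) (A B : Matrix (Fin m) (Fin n) ℝ)
    (R : Matrix (Fin L) (Fin m) ℝ) (r : Fin L → ℝ) : EReal :=
  ⨅ p : {p : (Fin n → ℝ) × Matrix (Fin L) (Fin m) ℝ × (Fin L → ℝ) //
      0 ≤ p.1 ∧ ∀ w ∈ dualW B d, 0 ≤ p.2.1 *ᵥ w + p.2.2 ∧
        w ≤ Rᵀ *ᵥ (p.2.1 *ᵥ w + p.2.2)},
    ((c ⬝ᵥ p.1.1 : ℝ) : EReal) +
      ⨆ w : dualW B d,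
        ((-(A *ᵥ p.1.1) ⬝ᵥ (w : Fin m → ℝ) + r ⬝ᵥ (p.1.2.1 *ᵥ (w : Fin m → ℝ) + p.1.2.2) : ℝ) : EReal)

section AuxLemmas

lemma sinh_le_mul_exp {u : ℝ} (hu : 0 ≤ u) : Real.sinh u ≤ u * Real.exp (u^2/2) := by
  rw [Real.sinh_eq_tsum, Real.exp_eq_exp_ℝ, NormedSpace.exp_eq_tsum (𝕂 := ℝ), ← tsum_mul_left]
  refine Summable.tsum_le_tsum (fun k => ?_) u.hasSum_sinh.summable
    ((NormedSpace.expSeries_summable' (𝕂 := ℝ) (u^2/2)).mul_left u)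
  simp only [smul_eq_mul, div_pow]
  have hrw : u * ((k.factorial : ℝ)⁻¹ * ((u ^ 2) ^ k / 2 ^ k)) =
      u ^ (2 * k + 1) / (2 ^ k * (k.factorial : ℝ)) := by
    rw [← pow_mul, pow_succ', div_eq_mul_inv, div_eq_mul_inv, mul_inv]
    ring
  rw [hrw]
  have hd : ((2:ℝ) ^ k * (k.factorial : ℝ)) ≤ ((2 * k + 1).factorial : ℝ) := by
    calc ((2:ℝ)^k * (k.factorial : ℝ)) = ((2^k * k.factorial : ℕ) : ℝ) := by push_cast; ring
    _ ≤ (((2*k+1).factorial : ℕ) : ℝ) := by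
        exact_mod_cast le_trans (Nat.two_pow_mul_factorial_le_factorial_two_mul k)
          (Nat.factorial_le (by omega))
  gcongr

lemma unif_mgf_bound {τ : ℝ} (hτ : τ < 0) :
    (Real.exp τ - 1) / τ ≤ Real.exp (τ/2 + τ^2/8) := by
  rw [div_le_iff_of_neg hτ]
  have hs := sinh_le_mul_exp (u := -τ/2) (by linarith)
  rw [Real.sinh_eq] at hs
  have h8 : (-τ/2)^2/2 = τ^2/8 := by ring
  rw [h8] at hs
  have hneg : -(-τ/2) = τ/2 := by ring
  rw [hneg] at hs
  have e1 : Real.exp (τ/2) * Real.exp (-τ/2) = 1 := by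
    rw [← Real.exp_add]; ring_nf; exact Real.exp_zero
  have e2 : Real.exp (τ/2) * Real.exp (τ/2) = Real.exp τ := by
    rw [← Real.exp_add]; ring_nf
  have e3 : Real.exp (τ/2 + τ^2/8) = Real.exp (τ/2) * Real.exp (τ^2/8) := by
    rw [← Real.exp_add]
  have hp : (0:ℝ) < Real.exp (τ/2) := Real.exp_pos _
  nlinarith [mul_le_mul_of_nonneg_left hs hp.le]

lemma integral_exp_Icc {τ : ℝ} (hτ : τ ≠ 0) :
    ∫ x in Set.Icc (0:ℝ) 1, Real.exp (τ * x) = (Real.exp τ - 1) / τ := by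
  rw [integral_Icc_eq_integral_Ioc,
    ← intervalIntegral.integral_of_le (by norm_num : (0:ℝ) ≤ 1),
    intervalIntegral.integral_comp_mul_left (fun x => Real.exp x) hτ]
  simp [integral_exp]
  field_simp

lemma row_indep {m n : ℕ} {Ω : Type} [MeasurableSpace Ω] {Pr : Measure Ω}
    (Bt : Fin m → Fin n → Ω → ℝ)
    (hindep : iIndepFun (fun p : Fin m × Fin n => Bt p.1 p.2) Pr)
    (i : Fin m) : iIndepFun (fun j => Bt i j) Pr := by
  rw [iIndepFun_iff_measure_inter_preimage_eq_mul]
  intro S sets hsets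
  classical
  set F : Fin m × Fin n → Ω → ℝ := fun p => Bt p.1 p.2 with hF
  set sets' : Fin m × Fin n → Set ℝ := fun p => if p.1 = i then sets p.2 else Set.univ
    with hsets'
  set emb : Fin n ↪ Fin m × Fin n :=
    ⟨fun j => (i, j), fun a b hab => by simpa using hab⟩ with hemb
  have key := hindep.measure_inter_preimage_eq_mul (S.map emb) (sets := sets') ?_
  · have h1 : (⋂ p ∈ S.map emb, F p ⁻¹' sets' p) = ⋂ j ∈ S, Bt i j ⁻¹' sets j := by
      ext ω
      simp only [Set.mem_iInter, Finset.mem_map, hemb, Function.Embedding.coeFn_mk]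
      constructor
      · intro hω j hj
        have := hω (i, j) ⟨j, hj, rfl⟩
        simpa [hF, hsets'] using this
      · rintro hω p ⟨j, hj, rfl⟩
        show ω ∈ Bt i j ⁻¹' (if i = i then sets j else Set.univ)
        rw [if_pos rfl]
        exact hω j hj
    have h2 : (∏ p ∈ S.map emb, Pr (F p ⁻¹' sets' p)) = ∏ j ∈ S, Pr (Bt i j ⁻¹' sets j) := by
      rw [Finset.prod_map]
      refine Finset.prod_congr rfl fun j hj => ?_
      simp [hF, hsets', hemb]
      exact congrArg (fun s => Pr (Bt i j ⁻¹' s)) (if_pos rfl)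
    rw [h1, h2] at key
    exact key
  · intro p hp
    by_cases h : p.1 = i
    · simp only [hsets', h, if_pos rfl]
      obtain ⟨j, hj, rfl⟩ := Finset.mem_map.mp hp
      exact hsets j hj
    · simp [hsets', h]

lemma ae_mem_Icc {Ω : Type} [MeasurableSpace Ω] {Pr : Measure Ω}
    {X : Ω → ℝ} (hmeas : Measurable X)
    (hunif : Measure.map X Pr = volume.restrict (Set.Icc (0 : ℝ) 1)) :
    ∀ᵐ ω ∂Pr, X ω ∈ Set.Icc (0:ℝ) 1 := by
  have : Pr (X ⁻¹' (Set.Icc (0:ℝ) 1)ᶜ) = 0 := by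
    rw [← Measure.map_apply hmeas measurableSet_Icc.compl, hunif,
      Measure.restrict_apply measurableSet_Icc.compl]
    simp
  exact this

lemma integrable_exp_mul {Ω : Type} [MeasurableSpace Ω] {Pr : Measure Ω}
    [IsProbabilityMeasure Pr] {X : Ω → ℝ} (hmeas : Measurable X)
    (hae : ∀ᵐ ω ∂Pr, X ω ∈ Set.Icc (0:ℝ) 1) (t : ℝ) :
    Integrable (fun ω => Real.exp (t * X ω)) Pr := by
  refine Integrable.mono' (integrable_const (Real.exp |t|))
    ((hmeas.const_mul t).exp.aestronglyMeasurable) ?_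
  filter_upwards [hae] with ω hω
  rw [Real.norm_eq_abs, abs_of_pos (Real.exp_pos _), Real.exp_le_exp]
  calc t * X ω ≤ |t * X ω| := le_abs_self _
  _ = |t| * |X ω| := abs_mul _ _
  _ ≤ |t| * 1 := by
      refine mul_le_mul_of_nonneg_left ?_ (abs_nonneg t)
      rw [abs_le]; exact ⟨by linarith [hω.1], hω.2⟩
  _ = |t| := mul_one _

lemma mgf_unif {Ω : Type} [MeasurableSpace Ω] {Pr : Measure Ω}
    [IsProbabilityMeasure Pr] {X : Ω → ℝ} (hmeas : Measurable X)
    (hunif : Measure.map X Pr = volume.restrict (Set.Icc (0 : ℝ) 1))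
    {τ : ℝ} (hτ : τ < 0) : mgf X Pr τ ≤ Real.exp (τ/2 + τ^2/8) := by
  have hcomp : mgf X Pr τ = ∫ x, Real.exp (τ * x) ∂(Measure.map X Pr) := by
    rw [mgf, integral_map hmeas.aemeasurable]
    exact (Real.continuous_exp.comp (continuous_const.mul continuous_id)).aestronglyMeasurable
  rw [hcomp, hunif, integral_exp_Icc hτ.ne]
  exact unif_mgf_bound hτ

lemma row_chernoff {n m : ℕ} (hm : 2 ≤ m) (hn : 1 ≤ n)
    {Ω : Type} [MeasurableSpace Ω] {Pr : Measure Ω} [IsProbabilityMeasure Pr]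
    (X : Fin n → Ω → ℝ) (hmeas : ∀ j, Measurable (X j))
    (hindep : iIndepFun X Pr)
    (hunif : ∀ j, Measure.map (X j) Pr = volume.restrict (Set.Icc (0:ℝ) 1)) :
    (Pr {ω | ∑ j, X j ω ≤ (n:ℝ)/2 - Real.sqrt (n * Real.log m)}).toReal ≤ ((m:ℝ)^2)⁻¹ := by
  have hm1 : (1:ℝ) < m := by exact_mod_cast lt_of_lt_of_le one_lt_two hm
  have hmpos : (0:ℝ) < m := lt_trans zero_lt_one hm1
  have hlog : 0 < Real.log m := Real.log_pos hm1
  have hnpos : (0:ℝ) < n := by exact_mod_cast hn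
  set t : ℝ := Real.sqrt (n * Real.log m) with htdef
  have ht : 0 < t := Real.sqrt_pos.mpr (by positivity)
  have ht2 : t^2 = n * Real.log m := Real.sq_sqrt (by positivity)
  set τ : ℝ := -4 * t / n with hτdef
  have hτ : τ < 0 := div_neg_of_neg_of_pos (by linarith) hnpos
  have haes : ∀ j, ∀ᵐ ω ∂Pr, X j ω ∈ Set.Icc (0:ℝ) 1 := fun j =>
    ae_mem_Icc (hmeas j) (hunif j)
  have hintS : Integrable (fun ω => Real.exp (τ * (∑ j, X j) ω)) Pr := by
    have hSmeas : Measurable (∑ j, X j) := by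
      have : (∑ j, X j) = fun ω => ∑ j, X j ω := by
        ext ω; simp [Finset.sum_apply]
      rw [this]
      exact Finset.measurable_sum Finset.univ (fun j _ => hmeas j)
    refine Integrable.mono' (integrable_const (Real.exp (|τ| * n)))
      ((hSmeas.const_mul τ).exp.aestronglyMeasurable)
      ?_
    filter_upwards [ae_all_iff.mpr haes] with ω hω
    rw [Real.norm_eq_abs, abs_of_pos (Real.exp_pos _), Real.exp_le_exp]
    have h1 : (∑ j, X j) ω = ∑ j, X j ω := by simp [Finset.sum_apply]
    have h2 : |(∑ j, X j) ω| ≤ (n:ℝ) := by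
      rw [h1]
      calc |∑ j, X j ω| ≤ ∑ j, |X j ω| := Finset.abs_sum_le_sum_abs _ _
      _ ≤ (∑ _j : Fin n, (1:ℝ)) := Finset.sum_le_sum fun j _ => abs_le.mpr
          ⟨by linarith [(hω j).1], (hω j).2⟩
      _ = n := by simp
    calc τ * (∑ j, X j) ω ≤ |τ * (∑ j, X j) ω| := le_abs_self _
    _ = |τ| * |(∑ j, X j) ω| := abs_mul _ _
    _ ≤ |τ| * n := mul_le_mul_of_nonneg_left h2 (abs_nonneg τ)
  have hcher := measure_le_le_exp_mul_mgf (X := ∑ j, X j) (μ := Pr)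
    ((n:ℝ)/2 - t) (le_of_lt hτ) hintS
  have hmgf : mgf (∑ j, X j) Pr τ ≤ Real.exp (n * (τ/2 + τ^2/8)) := by
    have := hindep.mgf_sum (t := τ) hmeas Finset.univ
    rw [this]
    have hstep : (∏ j, mgf (X j) Pr τ) ≤ ∏ _j : Fin n, Real.exp (τ/2 + τ^2/8) :=
      Finset.prod_le_prod (fun j _ => mgf_nonneg)
        (fun j _ => mgf_unif (hmeas j) (hunif j) hτ)
    refine le_trans hstep (le_of_eq ?_)
    rw [Finset.prod_const, Finset.card_univ, Fintype.card_fin, ← Real.exp_nat_mul]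
  have hev : {ω | ∑ j, X j ω ≤ (n:ℝ)/2 - t} = {ω | (∑ j, X j) ω ≤ (n:ℝ)/2 - t} := by
    ext ω; simp [Finset.sum_apply]
  rw [hev]
  calc (Pr {ω | (∑ j, X j) ω ≤ (n:ℝ)/2 - t}).toReal
      ≤ Real.exp (-τ * ((n:ℝ)/2 - t)) * mgf (∑ j, X j) Pr τ := hcher
  _ ≤ Real.exp (-τ * ((n:ℝ)/2 - t)) * Real.exp (n * (τ/2 + τ^2/8)) := by
      exact mul_le_mul_of_nonneg_left hmgf (le_of_lt (Real.exp_pos _))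
  _ = Real.exp (-τ * ((n:ℝ)/2 - t) + n * (τ/2 + τ^2/8)) := by rw [← Real.exp_add]
  _ = Real.exp (-(2 * Real.log m)) := by
      congr 1
      have hval : -τ * ((n:ℝ)/2 - t) + n * (τ/2 + τ^2/8) = -(2 * (t^2/n)) := by
        rw [hτdef]; field_simp; ring
      rw [hval, ht2]
      field_simp
  _ = ((m:ℝ)^2)⁻¹ := by
      rw [Real.exp_neg]
      congr 1
      rw [show (2:ℝ) * Real.log m = ((2:ℕ):ℝ) * Real.log m by norm_num,
        Real.exp_nat_mul, Real.exp_log hmpos]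

lemma notin_Icc_null {Ω : Type} [MeasurableSpace Ω] {Pr : Measure Ω}
    {X : Ω → ℝ} (hmeas : Measurable X)
    (hunif : Measure.map X Pr = volume.restrict (Set.Icc (0 : ℝ) 1)) :
    Pr (X ⁻¹' (Set.Icc (0:ℝ) 1)ᶜ) = 0 := by
  rw [← Measure.map_apply hmeas measurableSet_Icc.compl, hunif,
    Measure.restrict_apply measurableSet_Icc.compl]
  simp

lemma zAR_le_zAff {m n : ℕ} (U : Set (Fin m → ℝ)) (c d : Fin n → ℝ)
    (A B : Matrix (Fin m) (Fin n) ℝ) : zAR U c d A B ≤ zAff U c d A B := by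
  refine le_iInf fun p => ?_
  obtain ⟨⟨x, P, q⟩, hx, hfeas⟩ := p
  refine iInf_le_of_le ⟨x, hx⟩ ?_
  refine add_le_add le_rfl (iSup_mono fun h => ?_)
  exact iInf_le_of_le ⟨P *ᵥ (h : Fin m → ℝ) + q, (hfeas h h.2).1, (hfeas h h.2).2⟩ le_rfl

lemma zAff_le_mul_zAR {m n : ℕ} (hm : 0 < m) (hn : 0 < n)
    (U : Set (Fin m → ℝ)) (hU : U.Nonempty) (hUbdd : Bornology.IsBounded U)
    (c : Fin n → ℝ) (hc : 0 ≤ c) (dbar : ℝ) (hdbar : 0 < dbar)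
    (A B : Matrix (Fin m) (Fin n) ℝ) (ε : ℝ) (hε0 : 0 ≤ ε) (hε1 : ε < 1)
    (hB1 : ∀ i j, B i j ≤ 1)
    (hBs : ∀ i, (1 - ε) * n / 2 ≤ ∑ j, B i j) :
    zAff U c (fun _ => dbar) A B ≤
      ((2 / (1 - ε) : ℝ) : EReal) * zAR U c (fun _ => dbar) A B := by
  haveI : Nonempty (Fin m) := ⟨⟨0, hm⟩⟩
  haveI : Nonempty U := hU.to_subtype
  set d : Fin n → ℝ := fun _ => dbar with hd
  have hone : (0:ℝ) < 1 - ε := by linarith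
  have hnpos : (0:ℝ) < n := by exact_mod_cast hn
  set κ : ℝ := 2 / (1 - ε) with hκdef
  have hκpos : 0 < κ := by positivity
  have hκ1 : 1 ≤ κ := by rw [hκdef, le_div_iff₀ hone]; linarith
  obtain ⟨C, hC⟩ := isBounded_iff_forall_norm_le.mp hUbdd
  have hCge : ∀ h ∈ U, ∀ i, h i ≤ C := by
    intro h hh i
    calc h i ≤ |h i| := le_abs_self _
    _ = ‖h i‖ := rfl
    _ ≤ ‖h‖ := norm_le_pi_norm h i
    _ ≤ C := hC h hh
  set Φ : (Fin n → ℝ) → EReal := fun x =>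
    ⨆ h : U, ⨅ _y : {y : Fin n → ℝ // 0 ≤ y ∧ (h : Fin m → ℝ) ≤ A *ᵥ x + B *ᵥ y},
        ((d ⬝ᵥ (_y : Fin n → ℝ) : ℝ) : EReal) with hΦdef
  set f : (Fin n → ℝ) → (Fin m → ℝ) → ℝ := fun x h =>
    Finset.univ.sup' Finset.univ_nonempty (fun i => max (h i - (A *ᵥ x) i) 0) with hfdef
  set N : (Fin n → ℝ) → ℝ := fun x => sSup (f x '' U) with hNdef
  have hf0 : ∀ x h, 0 ≤ f x h := by
    intro x h
    exact le_trans (le_max_right _ 0)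
      (Finset.le_sup' (fun i => max (h i - (A *ᵥ x) i) 0) (Finset.mem_univ (Classical.arbitrary _)))
  have hfle : ∀ x h, h ∈ U → ∀ i, h i - (A *ᵥ x) i ≤ f x h := by
    intro x h hh i
    exact le_trans (le_max_left _ _)
      (Finset.le_sup' (fun i => max (h i - (A *ᵥ x) i) 0) (Finset.mem_univ i))
  have hbdd : ∀ x, BddAbove (f x '' U) := by
    intro x
    refine ⟨Finset.univ.sup' Finset.univ_nonempty (fun i => C + |(A *ᵥ x) i|), ?_⟩
    rintro v ⟨h, hh, rfl⟩
    refine Finset.sup'_le _ _ fun i _ => ?_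
    refine le_trans (max_le ?_ ?_) (Finset.le_sup' (fun i => C + |(A *ᵥ x) i|) (Finset.mem_univ i))
    · have := hCge h hh i
      have := neg_abs_le ((A *ᵥ x) i)
      linarith
    · have h0 := hU.choose_spec
      have : (0:ℝ) ≤ C := le_trans (norm_nonneg _) (hC _ h0)
      have := abs_nonneg ((A *ᵥ x) i)
      linarith
  have hNge : ∀ x h, h ∈ U → f x h ≤ N x := fun x h hh =>
    le_csSup (hbdd x) (Set.mem_image_of_mem _ hh)
  have hN0 : ∀ x, 0 ≤ N x := by
    intro x
    exact le_trans (hf0 x hU.choose) (hNge x _ hU.choose_spec)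
  have hΦge : ∀ x, ((dbar * N x : ℝ) : EReal) ≤ Φ x := by
    intro x
    have hinner : ∀ h : U, ((dbar * f x h : ℝ) : EReal) ≤
        ⨅ _y : {y : Fin n → ℝ // 0 ≤ y ∧ (h : Fin m → ℝ) ≤ A *ᵥ x + B *ᵥ y},
          ((d ⬝ᵥ (_y : Fin n → ℝ) : ℝ) : EReal) := by
      intro h
      refine le_iInf fun y => ?_
      obtain ⟨y, hy0, hyf⟩ := y
      rw [EReal.coe_le_coe_iff]
      have hsum0 : 0 ≤ ∑ j, y j := Finset.sum_nonneg fun j _ => hy0 j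
      have hdy : d ⬝ᵥ y = dbar * ∑ j, y j := by
        simp [hd, dotProduct, Finset.mul_sum]
      rw [hdy]
      refine mul_le_mul_of_nonneg_left ?_ hdbar.le
      refine Finset.sup'_le _ _ fun i _ => ?_
      refine max_le ?_ hsum0
      have h1 : (h : Fin m → ℝ) i ≤ (A *ᵥ x) i + (B *ᵥ y) i := hyf i
      have h2 : (B *ᵥ y) i ≤ ∑ j, y j := by
        rw [mulVec, dotProduct]
        refine Finset.sum_le_sum fun j _ => ?_
        have h1 := hB1 i j
        have h2 : (0:ℝ) ≤ y j := hy0 j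
        nlinarith
      linarith
    rw [le_iSup_iff]
    intro b hb
    induction b using EReal.rec with
    | bot =>
      exfalso
      have := le_trans (hinner (Classical.arbitrary U)) (hb (Classical.arbitrary U))
      exact EReal.coe_ne_bot _ (le_bot_iff.mp this)
    | coe β =>
      have hfb : ∀ h ∈ U, f x h ≤ β / dbar := by
        intro h hh
        have := le_trans (hinner ⟨h, hh⟩) (hb ⟨h, hh⟩)
        rw [EReal.coe_le_coe_iff] at this
        rw [le_div_iff₀ hdbar]
        linarith [this]
      have : N x ≤ β / dbar := by
        refine Real.sSup_le ?_ ?_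
        · rintro v ⟨h, hh, rfl⟩; exact hfb h hh
        · exact le_trans (hf0 x hU.choose) (hfb _ hU.choose_spec)
      rw [EReal.coe_le_coe_iff]
      calc dbar * N x ≤ dbar * (β / dbar) := mul_le_mul_of_nonneg_left this hdbar.le
      _ = β := by field_simp
    | top => exact le_top
  have hΦ0 : ∀ x, (0 : EReal) ≤ Φ x := fun x =>
    le_trans (by exact_mod_cast EReal.coe_nonneg.mpr (mul_nonneg hdbar.le (hN0 x))) (hΦge x)
  have hcx0 : ∀ x : Fin n → ℝ, 0 ≤ x → 0 ≤ c ⬝ᵥ x := by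
    intro x hx
    exact Finset.sum_nonneg fun j _ => mul_nonneg (hc j) (hx j)
  -- key step
  have key : ∀ (x : Fin n → ℝ) (hx : 0 ≤ x) (v : ℝ),
      ((c ⬝ᵥ x : ℝ) : EReal) + Φ x ≤ (v : EReal) →
      zAff U c d A B ≤ ((κ * v : ℝ) : EReal) := by
    intro x hx v hv
    set e : ℝ := 2 / ((1 - ε) * n) * N x with hedef
    have he0 : 0 ≤ e :=
      mul_nonneg (div_nonneg (by norm_num) (mul_pos hone hnpos).le) (hN0 x)
    set q : Fin n → ℝ := fun _ => e with hqdef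
    have hfeas : ∀ h ∈ U, 0 ≤ (0 : Matrix (Fin n) (Fin m) ℝ) *ᵥ h + q ∧
        h ≤ A *ᵥ x + B *ᵥ ((0 : Matrix (Fin n) (Fin m) ℝ) *ᵥ h + q) := by
      intro h hh
      constructor
      · rw [Matrix.zero_mulVec, zero_add]
        intro j; exact he0
      · rw [Matrix.zero_mulVec, zero_add]
        intro i
        have hBq : (B *ᵥ q) i = (∑ j, B i j) * e := by
          rw [mulVec, dotProduct, Finset.sum_mul]
        have hBqge : N x ≤ (B *ᵥ q) i := by
          rw [hBq]
          calc N x = ((1 - ε) * n / 2) * (2 / ((1 - ε) * n) * N x) := by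
                field_simp
          _ ≤ (∑ j, B i j) * e := by
            rw [hedef]
            exact mul_le_mul_of_nonneg_right (hBs i) he0
        have := hfle x h hh i
        have := hNge x h hh
        simp only [Pi.add_apply]
        linarith
    have hval : zAff U c d A B ≤ ((c ⬝ᵥ x + κ * (dbar * N x) : ℝ) : EReal) := by
      refine iInf_le_of_le ⟨(x, 0, q), hx, hfeas⟩ ?_
      have hsup : (⨆ h : U, ((d ⬝ᵥ ((0 : Matrix (Fin n) (Fin m) ℝ) *ᵥ (h : Fin m → ℝ) + q) : ℝ) : EReal))
          = ((κ * (dbar * N x) : ℝ) : EReal) := by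
        have hdq : ∀ h : U, d ⬝ᵥ ((0 : Matrix (Fin n) (Fin m) ℝ) *ᵥ (h : Fin m → ℝ) + q)
            = κ * (dbar * N x) := by
          intro h
          rw [Matrix.zero_mulVec, zero_add]
          have : d ⬝ᵥ q = ∑ _j : Fin n, dbar * e := rfl
          rw [this, Finset.sum_const, Finset.card_univ, Fintype.card_fin, nsmul_eq_mul, hedef,
            hκdef]
          field_simp
        simp_rw [hdq]
        exact iSup_const
      rw [show ((c ⬝ᵥ x + κ * (dbar * N x) : ℝ) : EReal) =
          ((c ⬝ᵥ x : ℝ) : EReal) + ((κ * (dbar * N x) : ℝ) : EReal) by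
            rw [← EReal.coe_add]]
      exact le_of_eq (by rw [hsup])
    refine le_trans hval ?_
    -- now real arithmetic
    have hΦtop : Φ x ≠ ⊤ := by
      intro htop
      rw [htop] at hv
      simp [EReal.add_top_iff_ne_bot] at hv
    have hΦbot : Φ x ≠ ⊥ := by
      intro hbot
      have := hΦ0 x
      rw [hbot] at this
      simp at this
    obtain ⟨φ, hφ⟩ : ∃ φ : ℝ, Φ x = (φ : EReal) := ⟨(Φ x).toReal, (EReal.coe_toReal hΦtop hΦbot).symm⟩
    rw [hφ, ← EReal.coe_add, EReal.coe_le_coe_iff] at hv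
    have hdN : dbar * N x ≤ φ := by
      have := hΦge x
      rw [hφ, EReal.coe_le_coe_iff] at this
      exact this
    have hcx : 0 ≤ c ⬝ᵥ x := hcx0 x hx
    rw [EReal.coe_le_coe_iff]
    nlinarith [mul_le_mul_of_nonneg_left hv hκpos.le,
      mul_le_mul_of_nonneg_left hdN hκpos.le,
      mul_nonneg (sub_nonneg.mpr hκ1) hcx]
  -- conclude
  have hzeq : zAR U c d A B = ⨅ x : {x : Fin n → ℝ // 0 ≤ x},
      ((c ⬝ᵥ (x : Fin n → ℝ) : ℝ) : EReal) + Φ (x : Fin n → ℝ) := rfl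
  by_cases hztop : zAR U c d A B = ⊤
  · rw [hztop, EReal.mul_top_of_pos (by exact_mod_cast EReal.coe_pos.mpr hκpos)]
    exact le_top
  · have hz0 : (0 : EReal) ≤ zAR U c d A B := by
      rw [hzeq]
      exact le_iInf fun x => add_nonneg (EReal.coe_nonneg.mpr (hcx0 x x.2)) (hΦ0 x)
    have hzbot : zAR U c d A B ≠ ⊥ := by
      intro hbot; rw [hbot] at hz0; simp at hz0
    obtain ⟨t, ht⟩ : ∃ t : ℝ, zAR U c d A B = (t : EReal) :=
      ⟨_, (EReal.coe_toReal hztop hzbot).symm⟩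
    rw [ht, ← EReal.coe_mul]
    refine le_of_forall_gt_imp_ge_of_dense fun b hb => ?_
    induction b using EReal.rec with
    | bot => exact absurd hb (by simp)
    | top => exact le_top
    | coe β =>
      rw [EReal.coe_lt_coe_iff] at hb
      set u : ℝ := t + (β - κ * t) / (2 * κ) with hudef
      have hut : t < u := by
        rw [hudef]
        have : 0 < (β - κ * t) / (2 * κ) := div_pos (by linarith) (by positivity)
        linarith
      have hκne : κ ≠ 0 := ne_of_gt hκpos
      have hκu : κ * u ≤ β := by
        have h2 : κ * u = κ * t + (β - κ * t) / 2 := by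
          rw [hudef]; field_simp
        rw [h2]; linarith
      have hlt : zAR U c d A B < (u : EReal) := by
        rw [ht]; exact_mod_cast hut
      rw [hzeq] at hlt
      obtain ⟨x, hxlt⟩ := iInf_lt_iff.mp hlt
      have := key x x.2 u (le_of_lt hxlt)
      exact le_trans this (by exact_mod_cast hκu)

end AuxLemmas

/-- For i.i.d. entries uniform on `[0,1]`, with probability at least
`1 - 1/m`, affine policies are a `2/(1-ε)`-approximation of the adjustable problem,
where `ε = 2√(log m / n)`. -/
theorem affine_approx_uniform {m n L : ℕ} (hm : 2 ≤ m) (hn : 1 ≤ n) (hL : 0 < L)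
    (c : Fin n → ℝ) (A : Matrix (Fin m) (Fin n) ℝ)
    (R : Matrix (Fin L) (Fin m) ℝ) (r : Fin L → ℝ)
    (hc : 0 ≤ c) (hA : ∀ i j, 0 ≤ A i j) (hR : ∀ i j, 0 ≤ R i j) (hr : 0 ≤ r)
    (hU : (polyU R r).Nonempty) (hUbdd : Bornology.IsBounded (polyU R r))
    (dbar : ℝ) (hdbar : 0 < dbar)
    (ε : ℝ) (hε : ε = 2 * Real.sqrt (Real.log m / n)) (hε1 : ε < 1)
    {Ω : Type} [MeasurableSpace Ω] (Pr : Measure Ω) [IsProbabilityMeasure Pr]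
    (Bt : Fin m → Fin n → Ω → ℝ)
    (hmeas : ∀ i j, Measurable (Bt i j))
    (hindep : iIndepFun
      (fun p : Fin m × Fin n => Bt p.1 p.2) Pr)
    (hunif : ∀ i j, Measure.map (Bt i j) Pr = volume.restrict (Set.Icc (0 : ℝ) 1)) :
    ENNReal.ofReal (1 - 1 / m) ≤
      Pr {ω | zAR (polyU R r) c (fun _ => dbar) A (fun i j => Bt i j ω) ≤
              zAff (polyU R r) c (fun _ => dbar) A (fun i j => Bt i j ω) ∧
            zAff (polyU R r) c (fun _ => dbar) A (fun i j => Bt i j ω) ≤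
              ((2 / (1 - ε) : ℝ) : EReal) *
                zAR (polyU R r) c (fun _ => dbar) A (fun i j => Bt i j ω)} := by
  have hm0 : 0 < m := lt_of_lt_of_le two_pos hm
  have hm1 : (1:ℝ) < m := by exact_mod_cast lt_of_lt_of_le one_lt_two hm
  have hmR : (0:ℝ) < m := by positivity
  have hn0 : 0 < n := hn
  have hnR : (0:ℝ) < n := by exact_mod_cast hn
  have hlog : 0 < Real.log m := Real.log_pos hm1
  have hε0 : 0 ≤ ε := by rw [hε]; positivity
  set t : ℝ := Real.sqrt ((n:ℝ) * Real.log m) with htdef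
  have hteq : Real.sqrt (Real.log m / n) * (n:ℝ) = t := by
    rw [htdef,
      show (n:ℝ) * Real.log m = (Real.log m / n) * (n:ℝ)^2 by field_simp,
      Real.sqrt_mul (div_nonneg hlog.le hnR.le), Real.sqrt_sq hnR.le]
  have hthr : (1 - ε) * (n:ℝ) / 2 = (n:ℝ)/2 - t := by
    rw [hε, ← hteq]; ring
  -- good events
  set G1 : Set Ω := ⋂ i, ⋂ j, (Bt i j) ⁻¹' (Set.Icc (0:ℝ) 1) with hG1def
  set G2 : Set Ω := ⋂ i, {ω | (n:ℝ)/2 - t ≤ ∑ j, Bt i j ω} with hG2def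
  have hG1meas : MeasurableSet G1 :=
    MeasurableSet.iInter fun i => MeasurableSet.iInter fun j => (hmeas i j) measurableSet_Icc
  have hG2meas : MeasurableSet G2 := by
    refine MeasurableSet.iInter fun i => ?_
    have : Measurable (fun ω => ∑ j, Bt i j ω) :=
      Finset.measurable_sum Finset.univ (fun j _ => hmeas i j)
    exact measurableSet_le measurable_const this
  have hGmeas : MeasurableSet (G1 ∩ G2) := hG1meas.inter hG2meas
  -- inclusion in the target event
  have hsub : G1 ∩ G2 ⊆ {ω | zAR (polyU R r) c (fun _ => dbar) A (fun i j => Bt i j ω) ≤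
              zAff (polyU R r) c (fun _ => dbar) A (fun i j => Bt i j ω) ∧
            zAff (polyU R r) c (fun _ => dbar) A (fun i j => Bt i j ω) ≤
              ((2 / (1 - ε) : ℝ) : EReal) *
                zAR (polyU R r) c (fun _ => dbar) A (fun i j => Bt i j ω)} := by
    rintro ω ⟨hω1, hω2⟩
    simp only [hG1def, Set.mem_iInter] at hω1
    simp only [hG2def, Set.mem_iInter, Set.mem_setOf_eq] at hω2
    refine ⟨zAR_le_zAff _ _ _ _ _, ?_⟩
    refine zAff_le_mul_zAR hm0 hn0 (polyU R r) hU hUbdd c hc dbar hdbar A _ ε hε0 hε1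
      (fun i j => (hω1 i j).2) (fun i => ?_)
    rw [hthr]
    exact hω2 i
  refine le_trans ?_ (measure_mono hsub)
  -- probability bound for the good event
  have hbad1 : Pr G1ᶜ = 0 := by
    rw [hG1def, Set.compl_iInter]
    refine measure_iUnion_null fun i => ?_
    rw [Set.compl_iInter]
    refine measure_iUnion_null fun j => ?_
    rw [← Set.preimage_compl]
    exact notin_Icc_null (hmeas i j) (hunif i j)
  have hbad2 : Pr G2ᶜ ≤ (m : ENNReal) * ENNReal.ofReal (((m:ℝ)^2)⁻¹) := by
    rw [hG2def, Set.compl_iInter]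
    refine le_trans (measure_iUnion_fintype_le _ _) ?_
    have hbound : ∀ i : Fin m, Pr {ω | (n:ℝ)/2 - t ≤ ∑ j, Bt i j ω}ᶜ ≤
        ENNReal.ofReal (((m:ℝ)^2)⁻¹) := by
      intro i
      have hsub2 : {ω | (n:ℝ)/2 - t ≤ ∑ j, Bt i j ω}ᶜ ⊆
          {ω | ∑ j, Bt i j ω ≤ (n:ℝ)/2 - Real.sqrt ((n:ℝ) * Real.log m)} := by
        intro ω hω
        simp only [Set.mem_compl_iff, Set.mem_setOf_eq, not_le] at hω
        exact le_of_lt hω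
      refine le_trans (measure_mono hsub2) ?_
      rw [ENNReal.le_ofReal_iff_toReal_le (measure_ne_top Pr _) (by positivity)]
      exact row_chernoff hm hn (fun j => Bt i j) (fun j => hmeas i j)
        (row_indep Bt hindep i) (fun j => hunif i j)
    refine le_trans (Finset.sum_le_sum fun i _ => hbound i) ?_
    rw [Finset.sum_const, Finset.card_univ, Fintype.card_fin, nsmul_eq_mul]
  have hGc : Pr (G1 ∩ G2)ᶜ ≤ ENNReal.ofReal (1/(m:ℝ)) := by
    rw [Set.compl_inter]
    refine le_trans (measure_union_le _ _) ?_
    rw [hbad1, zero_add]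
    refine le_trans hbad2 ?_
    rw [← ENNReal.ofReal_natCast m, ← ENNReal.ofReal_mul (by positivity)]
    refine ENNReal.ofReal_le_ofReal ?_
    rw [pow_two, mul_inv, ← mul_assoc, mul_inv_cancel₀ (ne_of_gt hmR), one_mul, one_div]
  calc ENNReal.ofReal (1 - 1 / m)
      ≤ 1 - ENNReal.ofReal (1/(m:ℝ)) := by
        refine ENNReal.le_sub_of_add_le_right ENNReal.ofReal_ne_top ?_
        rw [← ENNReal.ofReal_add (by
            rw [sub_nonneg, div_le_one hmR]; exact hm1.le) (by positivity)]
        rw [show (1 - 1/(m:ℝ)) + 1/(m:ℝ) = 1 by ring, ENNReal.ofReal_one]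
  _ ≤ 1 - Pr (G1 ∩ G2)ᶜ := tsub_le_tsub_left hGc 1
  _ = Pr (G1 ∩ G2) := by
      rw [prob_compl_eq_one_sub hGmeas, ENNReal.sub_sub_cancel ENNReal.one_ne_top prob_le_one]
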